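/- Let d ≥ 2 and let μ_H be the normalized Haar probability measure on the unitary group U(d). Then for any fixed row index i and distinct column indices j₁ ≠ j₂ in Fin d, ∫ |U_{i j₁}|² · |U_{i j₂}|² dμ_H(U) = 1/( d (d + 1) ); and likewise for any fixed column index j and distinct row indices i₁ ≠ i₂, ∫ |U_{i₁ j}|² · |U_{i₂ j}|² dμ_H(U) = 1/( d (d + 1) ). -/

import Mathlib

open MeasureTheory Matrix

noncomputable instance unitaryGroupMeasurableSpace {n : Type*} [Fintype n] [DecidableEq n] :
    MeasurableSpace (Matrix.unitaryGroup n ℂ) := borel _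

namespace FM
variable {d : ℕ}

instance : IsTopologicalGroup (Matrix.unitaryGroup (Fin d) ℂ) where
  continuous_mul := continuous_induced_rng.2 <|
    (continuous_subtype_val.comp continuous_fst).matrix_mul
      (continuous_subtype_val.comp continuous_snd)
  continuous_inv := continuous_induced_rng.2 <| continuous_subtype_val.matrix_conjTranspose

instance : CompactSpace (Matrix.unitaryGroup (Fin d) ℂ) := by
  apply isCompact_iff_compactSpace.mp
  have hclosed : IsClosed ((Matrix.unitaryGroup (Fin d) ℂ : Set (Matrix (Fin d) (Fin d) ℂ))) := by
    have : (Matrix.unitaryGroup (Fin d) ℂ : Set (Matrix (Fin d) (Fin d) ℂ))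
        = (fun A : Matrix (Fin d) (Fin d) ℂ => A * star A) ⁻¹' {1} := by
      ext A
      simp only [SetLike.mem_coe, Set.mem_preimage, Set.mem_singleton_iff,
        Matrix.mem_unitaryGroup_iff]
    rw [this]
    exact IsClosed.preimage (continuous_id.matrix_mul continuous_star) isClosed_singleton
  have hsub : (Matrix.unitaryGroup (Fin d) ℂ : Set (Matrix (Fin d) (Fin d) ℂ)) ⊆
      Set.pi Set.univ (fun _ : Fin d => Set.pi Set.univ
        (fun _ : Fin d => Metric.closedBall (0:ℂ) 1)) := by
    intro A hA i _ j _
    simpa using entry_norm_bound_of_unitary hA i j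
  exact IsCompact.of_isClosed_subset
    (isCompact_univ_pi fun _ => isCompact_univ_pi fun _ => isCompact_closedBall 0 1)
    hclosed hsub

instance : BorelSpace (Matrix.unitaryGroup (Fin d) ℂ) := ⟨rfl⟩

variable {d : ℕ}

lemma sum_two (p q : Fin d) (hpq : p ≠ q) (f : Fin d → ℂ)
    (h : ∀ j, j ≠ p → j ≠ q → f j = 0) : ∑ j, f j = f p + f q := by
  rw [← Finset.sum_pair hpq]
  refine (Finset.sum_subset (Finset.subset_univ _) fun x _ hx => ?_).symm
  simp only [Finset.mem_insert, Finset.mem_singleton, not_or] at hx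
  exact h x hx.1 hx.2

lemma sum_one (i : Fin d) (f : Fin d → ℂ) (h : ∀ j, j ≠ i → f j = 0) :
    ∑ j, f j = f i :=
  Finset.sum_eq_single_of_mem i (Finset.mem_univ i) (fun j _ hj => h j hj)

/-- permutation unitary -/
def permU (σ : Equiv.Perm (Fin d)) : Matrix.unitaryGroup (Fin d) ℂ :=
  ⟨Matrix.of fun i j => if σ j = i then 1 else 0, by
    rw [Matrix.mem_unitaryGroup_iff]
    ext i k
    rw [Matrix.mul_apply]
    rw [sum_one (σ⁻¹ i) _ (fun j hj => ?_), Matrix.one_apply]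
    · have hs : σ (σ⁻¹ i) = i := Equiv.apply_symm_apply σ i
      by_cases hik : i = k
      · subst hik
        simp [Matrix.star_apply, Matrix.of_apply, hs]
      · have h2 : σ (σ⁻¹ i) ≠ k := by rw [hs]; exact hik
        simp [Matrix.star_apply, Matrix.of_apply, hs, hik, h2]
    · have : σ j ≠ i := fun hh => hj (by rw [← hh]; exact (Equiv.symm_apply_apply σ j).symm)
      simp [Matrix.star_apply, Matrix.of_apply, this]⟩

lemma permU_mul_apply (σ : Equiv.Perm (Fin d)) (U : Matrix.unitaryGroup (Fin d) ℂ) (i j : Fin d) :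
    ((permU σ * U : Matrix.unitaryGroup (Fin d) ℂ) : Matrix (Fin d) (Fin d) ℂ) i j
      = (U : Matrix (Fin d) (Fin d) ℂ) (σ⁻¹ i) j := by
  rw [Matrix.UnitaryGroup.mul_val, Matrix.mul_apply]
  rw [sum_one (σ⁻¹ i) _ (fun k hk => ?_)]
  · simp [permU, Equiv.apply_symm_apply]
  · have : σ k ≠ i := fun hh => hk (by rw [← hh]; exact (Equiv.symm_apply_apply σ k).symm)
    simp [permU, this]

lemma mul_permU_apply (σ : Equiv.Perm (Fin d)) (U : Matrix.unitaryGroup (Fin d) ℂ) (i j : Fin d) :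
    ((U * permU σ : Matrix.unitaryGroup (Fin d) ℂ) : Matrix (Fin d) (Fin d) ℂ) i j
      = (U : Matrix (Fin d) (Fin d) ℂ) i (σ j) := by
  rw [Matrix.UnitaryGroup.mul_val, Matrix.mul_apply]
  rw [sum_one (σ j) _ (fun k hk => ?_)]
  · simp [permU]
  · simp [permU, Ne.symm hk]

noncomputable def rc : ℂ := (1 + Complex.I)/2

lemma rc_mul_star : rc * star rc = 1/2 := by
  rw [RCLike.star_def, Complex.mul_conj]
  have h1 : Complex.normSq rc = 1/2 := by
    simp [rc, Complex.normSq_apply, Complex.div_re, Complex.div_im, Complex.normSq_apply]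
    norm_num
  rw [h1]
  norm_num

/-- the matrix of the rotation unitary -/
noncomputable def rotM (p q : Fin d) (ω : ℂ) : Matrix (Fin d) (Fin d) ℂ :=
  Matrix.of fun i j =>
    if i = p then (if j = p then rc else if j = q then rc * ω else 0)
    else if i = q then (if j = p then -(rc * star ω) else if j = q then rc else 0)
    else if j = i then 1 else 0

section rot
variable {p q : Fin d} (hpq : p ≠ q) {ω : ℂ} (hω : ω * star ω = 1)

lemma rotM_row_p (j : Fin d) :
    rotM p q ω p j = if j = p then rc else if j = q then rc * ω else 0 := by
  simp [rotM]

include hpq in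
lemma rotM_row_q (j : Fin d) :
    rotM p q ω q j = if j = p then -(rc * star ω) else if j = q then rc else 0 := by
  simp [rotM, Ne.symm hpq]

lemma rotM_row_other {i : Fin d} (hip : i ≠ p) (hiq : i ≠ q) (j : Fin d) :
    rotM p q ω i j = if j = i then 1 else 0 := by
  simp [rotM, hip, hiq]

include hpq hω in
lemma rotM_mem : rotM p q ω ∈ Matrix.unitaryGroup (Fin d) ℂ := by
  rw [Matrix.mem_unitaryGroup_iff]
  ext i k
  rw [Matrix.mul_apply, Matrix.one_apply]
  by_cases hip : i = p <;> by_cases hiq : i = q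
  · exact absurd (hip.symm.trans hiq) hpq
  · rw [hip]
    by_cases hkp : k = p <;> by_cases hkq : k = q
    · exact absurd (hkp.symm.trans hkq) hpq
    · rw [hkp, if_pos rfl]
      rw [sum_two p q hpq _ (fun j hjp hjq => by
        simp [Matrix.star_apply, rotM_row_p, hjp, hjq])]
      simp only [Matrix.star_apply, rotM_row_p, if_pos rfl, if_neg hpq, if_neg (Ne.symm hpq), if_true]
      rw [star_mul']
      calc rc * star rc + rc * ω * (star rc * star ω)
          = rc * star rc + (rc * star rc) * (ω * star ω) := by ring
        _ = 1 := by rw [rc_mul_star, hω]; norm_num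
    · rw [hkq, if_neg hpq]
      rw [sum_two p q hpq _ (fun j hjp hjq => by
        simp [Matrix.star_apply, rotM_row_p, rotM_row_q hpq, hjp, hjq])]
      simp only [Matrix.star_apply, rotM_row_p, rotM_row_q hpq, if_pos rfl, if_neg hpq,
        if_neg (Ne.symm hpq), if_true]
      rw [star_neg, star_mul', star_star]
      ring
    · rw [if_neg (show ¬ p = k from fun h => hkp h.symm)]
      refine Finset.sum_eq_zero (fun j _ => ?_)
      by_cases hjp : j = p <;> by_cases hjq : j = q <;>
        simp [Matrix.star_apply, rotM_row_p, rotM_row_other hkp hkq, hjp, hjq,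
          Ne.symm hkp, Ne.symm hkq, hpq]
  · rw [hiq]
    by_cases hkp : k = p <;> by_cases hkq : k = q
    · exact absurd (hkp.symm.trans hkq) hpq
    · rw [hkp, if_neg (Ne.symm hpq)]
      rw [sum_two p q hpq _ (fun j hjp hjq => by
        simp [Matrix.star_apply, rotM_row_p, rotM_row_q hpq, hjp, hjq])]
      simp only [Matrix.star_apply, rotM_row_p, rotM_row_q hpq, if_pos rfl, if_neg hpq,
        if_neg (Ne.symm hpq), if_true]
      rw [star_mul']
      ring
    · rw [hkq, if_pos rfl]
      rw [sum_two p q hpq _ (fun j hjp hjq => by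
        simp [Matrix.star_apply, rotM_row_q hpq, hjp, hjq])]
      simp only [Matrix.star_apply, rotM_row_q hpq, if_pos rfl, if_neg hpq, if_neg (Ne.symm hpq), if_true]
      rw [star_neg, star_mul', star_star]
      calc -(rc * star ω) * -(star rc * ω) + rc * star rc
          = (rc * star rc) * (ω * star ω) + rc * star rc := by ring
        _ = 1 := by rw [rc_mul_star, hω]; norm_num
    · rw [if_neg (show ¬ q = k from fun h => hkq h.symm)]
      refine Finset.sum_eq_zero (fun j _ => ?_)
      by_cases hjp : j = p <;> by_cases hjq : j = q <;>
        simp [Matrix.star_apply, rotM_row_q hpq, rotM_row_other hkp hkq, hjp, hjq,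
          Ne.symm hkp, Ne.symm hkq, hpq]
  · -- i outside block
    rw [sum_one i _ (fun j hj => by
      simp [Matrix.star_apply, rotM_row_other hip hiq, hj])]
    rw [Matrix.star_apply, rotM_row_other hip hiq, if_pos rfl, one_mul]
    by_cases hkp : k = p <;> by_cases hkq : k = q
    · exact absurd (hkp.symm.trans hkq) hpq
    · rw [hkp, if_neg hip]
      simp [rotM_row_p, hip, hiq]
    · rw [hkq, if_neg hiq]
      simp [rotM_row_q hpq, hip, hiq]
    · rw [rotM_row_other hkp hkq]
      by_cases hik : i = k
      · simp [hik]
      · simp [hik, Ne.symm hik]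

/-- rotation unitary mixing rows p and q -/
noncomputable def rotU : Matrix.unitaryGroup (Fin d) ℂ :=
  ⟨rotM p q ω, rotM_mem hpq hω⟩

lemma rotU_mul_apply_p (U : Matrix.unitaryGroup (Fin d) ℂ) (j : Fin d) :
    ((rotU hpq hω * U : Matrix.unitaryGroup (Fin d) ℂ) : Matrix (Fin d) (Fin d) ℂ) p j
      = rc * ((U : Matrix (Fin d) (Fin d) ℂ) p j + ω * (U : Matrix (Fin d) (Fin d) ℂ) q j) := by
  rw [Matrix.UnitaryGroup.mul_val, Matrix.mul_apply]
  rw [sum_two p q hpq _ (fun k hkp hkq => by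
    simp [rotU, rotM_row_p, hkp, hkq])]
  simp only [rotU, rotM_row_p, if_pos rfl, if_neg hpq, if_neg (Ne.symm hpq), if_true]
  ring

end rot

variable (μ : Measure (Matrix.unitaryGroup (Fin d) ℂ)) [μ.IsHaarMeasure] [IsProbabilityMeasure μ]

theorem map_mul_right_eq (g : Matrix.unitaryGroup (Fin d) ℂ) : μ.map (· * g) = μ := by
  have h2 : IsProbabilityMeasure (μ.map (· * g)) :=
    Measure.isProbabilityMeasure_map (measurable_mul_const g).aemeasurable
  exact Measure.isHaarMeasure_eq_of_isProbabilityMeasure _ μ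

theorem integral_right_inv (f : Matrix.unitaryGroup (Fin d) ℂ → ℝ) (hf : Continuous f)
    (g : Matrix.unitaryGroup (Fin d) ℂ) : ∫ U, f (U * g) ∂μ = ∫ U, f U ∂μ := by
  conv_rhs => rw [← map_mul_right_eq μ g]
  rw [integral_map (measurable_mul_const g).aemeasurable hf.aestronglyMeasurable]

omit [IsProbabilityMeasure μ] in
theorem integral_left_inv (f : Matrix.unitaryGroup (Fin d) ℂ → ℝ)
    (g : Matrix.unitaryGroup (Fin d) ℂ) : ∫ U, f (g * U) ∂μ = ∫ U, f U ∂μ :=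
  integral_mul_left_eq_self f g

omit [IsProbabilityMeasure μ] in
theorem integrable_cont (f : Matrix.unitaryGroup (Fin d) ℂ → ℝ) (hf : Continuous f) :
    Integrable f μ :=
  hf.integrable_of_hasCompactSupport (isClosed_tsupport f).isCompact

/-- the basic integrand -/
def N (i j : Fin d) (U : Matrix.unitaryGroup (Fin d) ℂ) : ℝ :=
  Complex.normSq ((U : Matrix (Fin d) (Fin d) ℂ) i j)

lemma contN (i j : Fin d) : Continuous (N i j) :=
  Complex.continuous_normSq.comp (continuous_subtype_val.matrix_elem i j)

/-- fourth moment integral -/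
noncomputable def II (i₁ j₁ i₂ j₂ : Fin d) : ℝ := ∫ U, N i₁ j₁ U * N i₂ j₂ U ∂μ

lemma contf4 (i₁ j₁ i₂ j₂ : Fin d) : Continuous (fun U => N i₁ j₁ U * N i₂ j₂ U) :=
  (contN i₁ j₁).mul (contN i₂ j₂)

omit [IsProbabilityMeasure μ] in
lemma row_perm (σ : Equiv.Perm (Fin d)) (i₁ j₁ i₂ j₂ : Fin d) :
    II μ i₁ j₁ i₂ j₂ = II μ (σ i₁) j₁ (σ i₂) j₂ := by
  unfold II
  rw [← integral_left_inv μ (fun U => N i₁ j₁ U * N i₂ j₂ U) (permU σ⁻¹)]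
  refine integral_congr_ae (Filter.Eventually.of_forall fun U => ?_)
  simp only [N, permU_mul_apply, inv_inv]

lemma col_perm (σ : Equiv.Perm (Fin d)) (i₁ j₁ i₂ j₂ : Fin d) :
    II μ i₁ j₁ i₂ j₂ = II μ i₁ (σ j₁) i₂ (σ j₂) := by
  unfold II
  rw [← integral_right_inv μ (fun U => N i₁ j₁ U * N i₂ j₂ U) (contf4 _ _ _ _) (permU σ)]
  refine integral_congr_ae (Filter.Eventually.of_forall fun U => ?_)
  simp only [N, mul_permU_apply]

lemma exists_perm {a b c e : Fin d} (hab : a ≠ b) (hce : c ≠ e) :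
    ∃ σ : Equiv.Perm (Fin d), σ a = c ∧ σ b = e := by
  refine ⟨(Equiv.swap a c).trans (Equiv.swap ((Equiv.swap a c) b) e), ?_, ?_⟩
  · simp only [Equiv.trans_apply, Equiv.swap_apply_left]
    refine Equiv.swap_apply_of_ne_of_ne ?_ hce
    intro h
    exact hab ((Equiv.swap a c).injective ((Equiv.swap_apply_left a c).trans h))
  · simp only [Equiv.trans_apply, Equiv.swap_apply_left]

/-- column sums of squared moduli are 1 -/
lemma colsum (U : Matrix.unitaryGroup (Fin d) ℂ) (j : Fin d) :
    ∑ i, N i j U = 1 := by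
  have h := U.2.1
  have h2 := congrFun (congrFun h j) j
  rw [Matrix.mul_apply, Matrix.one_apply_eq] at h2
  have h3 : ∑ i, ((N i j U : ℝ) : ℂ) = 1 := by
    rw [← h2]
    refine Finset.sum_congr rfl fun i _ => ?_
    rw [Matrix.star_apply, N, Complex.normSq_eq_conj_mul_self]
    rfl
  rw [← Complex.ofReal_sum] at h3
  exact_mod_cast h3

/-- row sums of squared moduli are 1 -/
lemma rowsum (U : Matrix.unitaryGroup (Fin d) ℂ) (i : Fin d) :
    ∑ j, N i j U = 1 := by
  have h := U.2.2
  have h2 := congrFun (congrFun h i) i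
  rw [Matrix.mul_apply, Matrix.one_apply_eq] at h2
  have h3 : ∑ j, ((N i j U : ℝ) : ℂ) = 1 := by
    rw [← h2]
    refine Finset.sum_congr rfl fun j _ => ?_
    rw [Matrix.star_apply, N, ← Complex.mul_conj]
    rfl
  rw [← Complex.ofReal_sum] at h3
  exact_mod_cast h3

lemma normSq_rc : Complex.normSq rc = 1/2 := by
  simp [rc, Complex.normSq_apply, Complex.div_re, Complex.div_im, Complex.normSq_apply]
  norm_num

lemma count_sum (hd1 : 1 ≤ d) (v : Fin d → Fin d → ℝ) (A B : ℝ)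
    (hdiag : ∀ x, v x x = A) (hoff : ∀ x y, x ≠ y → v x y = B) :
    ∑ x, ∑ y, v x y = d * A + ((d : ℝ) * ((d : ℝ) - 1)) * B := by
  have inner : ∀ x, ∑ y, v x y = A + ((d:ℝ) - 1) * B := by
    intro x
    rw [← Finset.add_sum_erase _ _ (Finset.mem_univ x), hdiag]
    congr 1
    rw [Finset.sum_congr rfl (fun y hy => hoff x y (Finset.ne_of_mem_erase hy).symm)]
    rw [Finset.sum_const, Finset.card_erase_of_mem (Finset.mem_univ x)]
    simp only [Finset.card_univ, Fintype.card_fin, nsmul_eq_mul]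
    rw [Nat.cast_sub hd1, Nat.cast_one]
  rw [Finset.sum_congr rfl (fun x _ => inner x), Finset.sum_const]
  simp only [Finset.card_univ, Fintype.card_fin, nsmul_eq_mul]
  ring

lemma integrable_f4 (i₁ j₁ i₂ j₂ : Fin d) : Integrable (fun U => N i₁ j₁ U * N i₂ j₂ U) μ :=
  integrable_cont μ _ (contf4 _ _ _ _)

lemma sum_col (j : Fin d) : ∑ i₁, ∑ i₂, II μ i₁ j i₂ j = 1 := by
  have key : ∫ U, ∑ i₁, ∑ i₂, N i₁ j U * N i₂ j U ∂μ = 1 := by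
    have hpt : ∀ U : Matrix.unitaryGroup (Fin d) ℂ,
        (∑ i₁, ∑ i₂, N i₁ j U * N i₂ j U) = 1 := fun U => by
      rw [← Finset.sum_mul_sum, colsum]; ring
    rw [integral_congr_ae (Filter.Eventually.of_forall hpt)]
    simp
  rw [← key, integral_finset_sum _
    (fun i₁ _ => integrable_finset_sum _ (fun i₂ _ => integrable_f4 μ i₁ j i₂ j))]
  exact Finset.sum_congr rfl fun i₁ _ =>
    (integral_finset_sum _ (fun i₂ _ => integrable_f4 μ i₁ j i₂ j)).symm

lemma sum_row (i : Fin d) : ∑ j₁, ∑ j₂, II μ i j₁ i j₂ = 1 := by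
  have key : ∫ U, ∑ j₁, ∑ j₂, N i j₁ U * N i j₂ U ∂μ = 1 := by
    have hpt : ∀ U : Matrix.unitaryGroup (Fin d) ℂ,
        (∑ j₁, ∑ j₂, N i j₁ U * N i j₂ U) = 1 := fun U => by
      rw [← Finset.sum_mul_sum, rowsum]; ring
    rw [integral_congr_ae (Filter.Eventually.of_forall hpt)]
    simp
  rw [← key, integral_finset_sum _
    (fun j₁ _ => integrable_finset_sum _ (fun j₂ _ => integrable_f4 μ i j₁ i j₂))]
  exact Finset.sum_congr rfl fun j₁ _ =>
    (integral_finset_sum _ (fun j₂ _ => integrable_f4 μ i j₁ i j₂)).symm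

lemma quad_point (x y : ℂ) :
    (Complex.normSq (rc * (x + 1 * y)))^2 + (Complex.normSq (rc * (x + Complex.I * y)))^2
      + (Complex.normSq (rc * (x + (-1) * y)))^2
      + (Complex.normSq (rc * (x + (-Complex.I) * y)))^2
    = Complex.normSq x ^ 2 + Complex.normSq y ^ 2
      + 4 * (Complex.normSq x * Complex.normSq y) := by
  rw [Complex.normSq_mul, Complex.normSq_mul, Complex.normSq_mul, Complex.normSq_mul, normSq_rc]
  simp only [Complex.normSq_apply, Complex.add_re, Complex.add_im, Complex.mul_re, Complex.mul_im,
    Complex.I_re, Complex.I_im, Complex.one_re, Complex.one_im, Complex.neg_re, Complex.neg_im]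
  ring

lemma diag_eq_off (p q : Fin d) (hpq : p ≠ q) (j : Fin d) :
    II μ p j p j = 2 * II μ p j q j := by
  have cg : ∀ ω : ℂ, Continuous (fun U : Matrix.unitaryGroup (Fin d) ℂ =>
      (Complex.normSq (rc * ((U : Matrix (Fin d) (Fin d) ℂ) p j + ω *
        (U : Matrix (Fin d) (Fin d) ℂ) q j)))^2) := fun ω =>
    (Complex.continuous_normSq.comp (continuous_const.mul
      ((continuous_subtype_val.matrix_elem p j).add
        (continuous_const.mul (continuous_subtype_val.matrix_elem q j))))).pow 2
  have hrot : ∀ (ω : ℂ) (hω : ω * star ω = 1),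
      II μ p j p j = ∫ U, (Complex.normSq (rc * ((U : Matrix (Fin d) (Fin d) ℂ) p j + ω *
        (U : Matrix (Fin d) (Fin d) ℂ) q j)))^2 ∂μ := by
    intro ω hω
    unfold II
    rw [← integral_left_inv μ _ (rotU hpq hω)]
    refine integral_congr_ae (Filter.Eventually.of_forall fun U => ?_)
    simp only [N, rotU_mul_apply_p hpq hω]
    ring
  have h1 : (1:ℂ) * star (1:ℂ) = 1 := by simp
  have hI : Complex.I * star Complex.I = 1 := by
    simp [Complex.star_def, Complex.conj_I, Complex.I_mul_I]
  have hm1 : (-1:ℂ) * star (-1:ℂ) = 1 := by simp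
  have hmI : (-Complex.I) * star (-Complex.I) = 1 := by
    simp [Complex.star_def, Complex.conj_I, Complex.I_mul_I]
  have hqq : II μ q j q j = II μ p j p j := by
    have := row_perm μ (Equiv.swap p q) p j p j
    rw [Equiv.swap_apply_left] at this
    exact this.symm
  -- splitting the "nice" integrand
  have e2 : ∫ U, ((N p j U * N p j U + N q j U * N q j U) + 4 * (N p j U * N q j U)) ∂μ
      = (∫ U, (N p j U * N p j U + N q j U * N q j U) ∂μ)
        + ∫ U, 4 * (N p j U * N q j U) ∂μ :=
    integral_add ((integrable_f4 μ p j p j).add (integrable_f4 μ q j q j))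
      ((integrable_f4 μ p j q j).const_mul 4)
  have e3 : ∫ U, (N p j U * N p j U + N q j U * N q j U) ∂μ
      = (∫ U, N p j U * N p j U ∂μ) + ∫ U, N q j U * N q j U ∂μ :=
    integral_add (integrable_f4 μ p j p j) (integrable_f4 μ q j q j)
  have e4 : ∫ U, 4 * (N p j U * N q j U) ∂μ = 4 * ∫ U, N p j U * N q j U ∂μ :=
    integral_const_mul 4 _
  -- splitting the four rotated integrands
  have g1 : ∫ U, (((Complex.normSq (rc * ((U : Matrix (Fin d) (Fin d) ℂ) p j + 1 *
            (U : Matrix (Fin d) (Fin d) ℂ) q j)))^2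
          + (Complex.normSq (rc * ((U : Matrix (Fin d) (Fin d) ℂ) p j + Complex.I *
            (U : Matrix (Fin d) (Fin d) ℂ) q j)))^2)
          + ((Complex.normSq (rc * ((U : Matrix (Fin d) (Fin d) ℂ) p j + (-1) *
            (U : Matrix (Fin d) (Fin d) ℂ) q j)))^2
          + (Complex.normSq (rc * ((U : Matrix (Fin d) (Fin d) ℂ) p j + (-Complex.I) *
            (U : Matrix (Fin d) (Fin d) ℂ) q j)))^2)) ∂μ
      = ((∫ U, (Complex.normSq (rc * ((U : Matrix (Fin d) (Fin d) ℂ) p j + 1 *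
            (U : Matrix (Fin d) (Fin d) ℂ) q j)))^2 ∂μ)
          + ∫ U, (Complex.normSq (rc * ((U : Matrix (Fin d) (Fin d) ℂ) p j + Complex.I *
            (U : Matrix (Fin d) (Fin d) ℂ) q j)))^2 ∂μ)
          + ((∫ U, (Complex.normSq (rc * ((U : Matrix (Fin d) (Fin d) ℂ) p j + (-1) *
            (U : Matrix (Fin d) (Fin d) ℂ) q j)))^2 ∂μ)
          + ∫ U, (Complex.normSq (rc * ((U : Matrix (Fin d) (Fin d) ℂ) p j + (-Complex.I) *
            (U : Matrix (Fin d) (Fin d) ℂ) q j)))^2 ∂μ) :=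
    (integral_add ((integrable_cont μ _ (cg 1)).add (integrable_cont μ _ (cg Complex.I)))
      ((integrable_cont μ _ (cg (-1))).add (integrable_cont μ _ (cg (-Complex.I))))).trans
      (congrArg₂ (· + ·)
        (integral_add (integrable_cont μ _ (cg 1)) (integrable_cont μ _ (cg Complex.I)))
        (integral_add (integrable_cont μ _ (cg (-1))) (integrable_cont μ _ (cg (-Complex.I)))))
  have hptwise : ∀ U : Matrix.unitaryGroup (Fin d) ℂ,
      (((Complex.normSq (rc * ((U : Matrix (Fin d) (Fin d) ℂ) p j + 1 *
            (U : Matrix (Fin d) (Fin d) ℂ) q j)))^2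
          + (Complex.normSq (rc * ((U : Matrix (Fin d) (Fin d) ℂ) p j + Complex.I *
            (U : Matrix (Fin d) (Fin d) ℂ) q j)))^2)
          + ((Complex.normSq (rc * ((U : Matrix (Fin d) (Fin d) ℂ) p j + (-1) *
            (U : Matrix (Fin d) (Fin d) ℂ) q j)))^2
          + (Complex.normSq (rc * ((U : Matrix (Fin d) (Fin d) ℂ) p j + (-Complex.I) *
            (U : Matrix (Fin d) (Fin d) ℂ) q j)))^2))
        = (N p j U * N p j U + N q j U * N q j U) + 4 * (N p j U * N q j U) := by
    intro U
    have := quad_point ((U : Matrix (Fin d) (Fin d) ℂ) p j) ((U : Matrix (Fin d) (Fin d) ℂ) q j)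
    simp only [N]
    rw [show (((Complex.normSq (rc * ((U : Matrix (Fin d) (Fin d) ℂ) p j + 1 *
            (U : Matrix (Fin d) (Fin d) ℂ) q j)))^2
          + (Complex.normSq (rc * ((U : Matrix (Fin d) (Fin d) ℂ) p j + Complex.I *
            (U : Matrix (Fin d) (Fin d) ℂ) q j)))^2)
          + ((Complex.normSq (rc * ((U : Matrix (Fin d) (Fin d) ℂ) p j + (-1) *
            (U : Matrix (Fin d) (Fin d) ℂ) q j)))^2
          + (Complex.normSq (rc * ((U : Matrix (Fin d) (Fin d) ℂ) p j + (-Complex.I) *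
            (U : Matrix (Fin d) (Fin d) ℂ) q j)))^2))
        = ((Complex.normSq (rc * ((U : Matrix (Fin d) (Fin d) ℂ) p j + 1 *
            (U : Matrix (Fin d) (Fin d) ℂ) q j)))^2
          + (Complex.normSq (rc * ((U : Matrix (Fin d) (Fin d) ℂ) p j + Complex.I *
            (U : Matrix (Fin d) (Fin d) ℂ) q j)))^2
          + (Complex.normSq (rc * ((U : Matrix (Fin d) (Fin d) ℂ) p j + (-1) *
            (U : Matrix (Fin d) (Fin d) ℂ) q j)))^2
          + (Complex.normSq (rc * ((U : Matrix (Fin d) (Fin d) ℂ) p j + (-Complex.I) *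
            (U : Matrix (Fin d) (Fin d) ℂ) q j)))^2) from by ring, this]
    ring
  have hfour : 4 * II μ p j p j
      = ∫ U, ((N p j U * N p j U + N q j U * N q j U) + 4 * (N p j U * N q j U)) ∂μ := by
    rw [← integral_congr_ae (Filter.Eventually.of_forall hptwise), g1,
      ← hrot 1 h1, ← hrot Complex.I hI, ← hrot (-1) hm1, ← hrot (-Complex.I) hmI]
    ring
  have hfinal : 4 * II μ p j p j = II μ p j p j + II μ q j q j + 4 * II μ p j q j := by
    rw [hfour, e2, e3, e4]
    rfl
  rw [hqq] at hfinal
  linarith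

lemma off_col_eq (p q x y : Fin d) (hpq : p ≠ q) (hxy : x ≠ y) (j : Fin d) :
    II μ x j y j = II μ p j q j := by
  obtain ⟨σ, hp, hq⟩ := exists_perm hpq hxy
  have h := row_perm μ σ p j q j
  rw [hp, hq] at h
  exact h.symm

lemma diag_col_eq (x p : Fin d) (j : Fin d) : II μ x j x j = II μ p j p j := by
  have h := row_perm μ (Equiv.swap p x) p j p j
  rw [Equiv.swap_apply_left] at h
  exact h.symm

lemma off_row_eq (i p q x y : Fin d) (hpq : p ≠ q) (hxy : x ≠ y) :
    II μ i x i y = II μ i p i q := by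
  obtain ⟨σ, hp, hq⟩ := exists_perm hpq hxy
  have h := col_perm μ σ i p i q
  rw [hp, hq] at h
  exact h.symm

lemma col_answer (hd : 2 ≤ d) (p q : Fin d) (hpq : p ≠ q) (j : Fin d) :
    II μ p j q j = 1 / ((d : ℝ) * ((d : ℝ) + 1)) := by
  have hdR : (2:ℝ) ≤ (d:ℝ) := by exact_mod_cast hd
  have hne : (d:ℝ) * ((d:ℝ) + 1) ≠ 0 := by nlinarith
  have hA : II μ p j p j = 2 * II μ p j q j := diag_eq_off μ p q hpq j
  have h1 := sum_col μ j
  rw [count_sum (by omega) (fun x y => II μ x j y j) (2 * II μ p j q j) (II μ p j q j)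
    (fun x => (diag_col_eq μ x p j).trans hA)
    (fun x y hxy => off_col_eq μ p q x y hpq hxy j)] at h1
  rw [eq_div_iff hne]
  linear_combination h1

lemma diag_answer (hd : 2 ≤ d) (i j : Fin d) :
    II μ i j i j = 2 / ((d : ℝ) * ((d : ℝ) + 1)) := by
  have : Nontrivial (Fin d) :=
    ⟨⟨⟨0, by omega⟩, ⟨1, by omega⟩, by simp [Fin.ext_iff]⟩⟩
  obtain ⟨q, hq⟩ := exists_ne i
  rw [diag_eq_off μ i q (Ne.symm hq) j, col_answer μ hd i q (Ne.symm hq) j]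
  ring

lemma row_answer (hd : 2 ≤ d) (i j₁ j₂ : Fin d) (hj : j₁ ≠ j₂) :
    II μ i j₁ i j₂ = 1 / ((d : ℝ) * ((d : ℝ) + 1)) := by
  have hdR : (2:ℝ) ≤ (d:ℝ) := by exact_mod_cast hd
  have hne : (d:ℝ) * ((d:ℝ) + 1) ≠ 0 := by nlinarith
  have hne1 : (d:ℝ) - 1 ≠ 0 := by nlinarith
  have h1 := sum_row μ i
  rw [count_sum (by omega) (fun x y => II μ i x i y) (2 / ((d : ℝ) * ((d : ℝ) + 1)))
    (II μ i j₁ i j₂)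
    (fun x => diag_answer μ hd i x)
    (fun x y hxy => off_row_eq μ i j₁ j₂ x y hj hxy)] at h1
  rw [eq_div_iff hne]
  have h2 : (d:ℝ) * (2 / ((d : ℝ) * ((d : ℝ) + 1))) = 2 / ((d:ℝ) + 1) := by
    rw [mul_div_assoc']
    rw [div_eq_div_iff hne (by nlinarith)]
    ring
  rw [h2] at h1
  have h3 : (2:ℝ) / ((d:ℝ)+1) = 2 * ((d:ℝ)+1)⁻¹ := by ring
  have h4 : ((d:ℝ)+1) * ((d:ℝ)+1)⁻¹ = 1 := mul_inv_cancel₀ (by nlinarith)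
  -- multiply h1 by (d+1)
  have h5 : ((d:ℝ)-1) * (II μ i j₁ i j₂ * ((d:ℝ) * ((d:ℝ) + 1)))
      = ((d:ℝ)-1) * 1 := by
    rw [h3] at h1
    linear_combination ((d:ℝ)+1) * h1 - 2 * h4
  exact mul_left_cancel₀ hne1 h5

end FM

/-- **Fourth-moment Haar integral, same row or same column.** For `d ≥ 2`:
for a fixed row `i` and distinct columns `j₁ ≠ j₂`,
`∫ |U_{i j₁}|² |U_{i j₂}|² dμ_H(U) = 1/(d(d+1))`, and likewise for a fixed column `j`
and distinct rows `i₁ ≠ i₂`, `∫ |U_{i₁ j}|² |U_{i₂ j}|² dμ_H(U) = 1/(d(d+1))`. -/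
theorem fourth_moment_haar_unitary_same_row_or_column
    (d : ℕ) (hd : 2 ≤ d)
    (μH : Measure (Matrix.unitaryGroup (Fin d) ℂ))
    [μH.IsHaarMeasure] [IsProbabilityMeasure μH] :
    (∀ (i j₁ j₂ : Fin d), j₁ ≠ j₂ →
      ∫ U : Matrix.unitaryGroup (Fin d) ℂ,
          ‖(U : Matrix (Fin d) (Fin d) ℂ) i j₁‖ ^ 2 *
            ‖(U : Matrix (Fin d) (Fin d) ℂ) i j₂‖ ^ 2 ∂μH
        = 1 / ((d : ℝ) * ((d : ℝ) + 1))) ∧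
    (∀ (j i₁ i₂ : Fin d), i₁ ≠ i₂ →
      ∫ U : Matrix.unitaryGroup (Fin d) ℂ,
          ‖(U : Matrix (Fin d) (Fin d) ℂ) i₁ j‖ ^ 2 *
            ‖(U : Matrix (Fin d) (Fin d) ℂ) i₂ j‖ ^ 2 ∂μH
        = 1 / ((d : ℝ) * ((d : ℝ) + 1))) := by
  constructor
  · intro i j₁ j₂ hj
    have h : FM.II μH i j₁ i j₂
        = ∫ U : Matrix.unitaryGroup (Fin d) ℂ,
            ‖(U : Matrix (Fin d) (Fin d) ℂ) i j₁‖ ^ 2 *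
              ‖(U : Matrix (Fin d) (Fin d) ℂ) i j₂‖ ^ 2 ∂μH := by
      unfold FM.II FM.N
      refine integral_congr_ae (Filter.Eventually.of_forall fun U => ?_)
      simp only [Complex.sq_norm]
    rw [← h]
    exact FM.row_answer μH hd i j₁ j₂ hj
  · intro j i₁ i₂ hi
    have h : FM.II μH i₁ j i₂ j
        = ∫ U : Matrix.unitaryGroup (Fin d) ℂ,
            ‖(U : Matrix (Fin d) (Fin d) ℂ) i₁ j‖ ^ 2 *
              ‖(U : Matrix (Fin d) (Fin d) ℂ) i₂ j‖ ^ 2 ∂μH := by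
      unfold FM.II FM.N
      refine integral_congr_ae (Filter.Eventually.of_forall fun U => ?_)
      simp only [Complex.sq_norm]
    rw [← h]
    exact FM.col_answer μH hd i₁ i₂ hi j
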